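/- Let G be a graph whose vertex set is partitioned into cliques C_1,…,C_m, and suppose playing any vertex in C_j reveals the same observation Z_j. Then the mutual information gained about A* when playing A_t (distributed like A*) satisfies I(A*;(A_t,Y_{A_t})) ≥ Σ_{j=1}^m P(A* ∈ C_j) I(A*; Z_j), i.e., the information gain aggregates at the level of cliques rather than individual arms. -/
import Mathlib


open scoped Classical

noncomputable section

variable {Ω : Type*} [Fintype Ω]

/-- Probability that the random variable `X` takes the value `a`, under the pmf `p`
on the finite sample space `Ω`. -/
def probEq {α : Type*} (p : Ω → ℝ) (X : Ω → α) (a : α) : ℝ :=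
  ∑ ω, if X ω = a then p ω else 0

/-- Expectation of `f` under the pmf `p`. -/
def pmfExp (p : Ω → ℝ) (f : Ω → ℝ) : ℝ := ∑ ω, p ω * f ω

/-- Shannon entropy (in nats) of the distribution of `X` under `p`. -/
def entropyOf {α : Type*} (p : Ω → ℝ) (X : Ω → α) : ℝ :=
  -∑ ω, p ω * Real.log (probEq p X (X ω))

/-- Mutual information `I(X;Y)` under the pmf `p`. -/
def mutualInfo {α β : Type*} (p : Ω → ℝ) (X : Ω → α) (Y : Ω → β) : ℝ :=
  ∑ ω, p ω * Real.log (probEq p (fun ω' => (X ω', Y ω')) (X ω, Y ω) /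
    (probEq p X (X ω) * probEq p Y (Y ω)))

/-- The pmf `p` conditioned on the event `W = c`. -/
def condOn {γ : Type*} (p : Ω → ℝ) (W : Ω → γ) (c : γ) : Ω → ℝ :=
  fun ω => (if W ω = c then p ω else 0) / probEq p W c

/-- Conditional mutual information `I(X;Y ∣ W)` under the pmf `p`. -/
def condMutualInfo {α β γ : Type*} (p : Ω → ℝ) (X : Ω → α) (Y : Ω → β) (W : Ω → γ) : ℝ :=
  ∑ ω, p ω * Real.log
    ((probEq p (fun ω' => (X ω', Y ω', W ω')) (X ω, Y ω, W ω) * probEq p W (W ω)) /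
      (probEq p (fun ω' => (X ω', W ω')) (X ω, W ω) *
        probEq p (fun ω' => (Y ω', W ω')) (Y ω, W ω)))

/-- The history after `t` rounds of the observation process `O`. -/
def history {T : ℕ} {𝒪 : Type*} (O : Fin T → Ω → 𝒪) (t : Fin T) (ω : Ω) :
    Fin T → Option 𝒪 :=
  fun s => if (s : ℕ) < (t : ℕ) then some (O s ω) else none

/-- A map `f : V → Fin m` is a clique covering of `G` if every fiber induces a clique. -/
def IsCliqueCovering {V : Type*} (G : SimpleGraph V) {m : ℕ} (f : V → Fin m) : Prop :=
  ∀ c : Fin m, G.IsClique (f ⁻¹' {c})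


/-! ### Auxiliary lemmas -/

lemma sum_probEq_mul {Ω α : Type*} [Fintype Ω] [DecidableEq α] (p : Ω → ℝ) (X : Ω → α)
    (F : α → ℝ) :
    ∑ ω, p ω * F (X ω) = ∑ x ∈ Finset.univ.image X, probEq p X x * F x := by
  unfold probEq
  simp only [Finset.sum_mul, ite_mul, zero_mul]
  rw [Finset.sum_comm]
  refine Finset.sum_congr rfl fun ω _ => ?_
  have h1 : ∀ x ∈ Finset.univ.image X,
      (if X ω = x then p ω * F x else 0) = (if X ω = x then p ω * F (X ω) else 0) := by
    intro x _; by_cases h : X ω = x <;> simp [h]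
  rw [Finset.sum_congr rfl h1, Finset.sum_ite_eq]
  simp

lemma probEq_eq_zero_of_not_mem {Ω α : Type*} [Fintype Ω] [DecidableEq α] (p : Ω → ℝ)
    (X : Ω → α) (x : α) (hx : x ∉ Finset.univ.image X) : probEq p X x = 0 := by
  refine Finset.sum_eq_zero fun ω _ => ?_
  rw [if_neg]
  intro h; exact hx (h ▸ Finset.mem_image_of_mem X (Finset.mem_univ ω))

lemma sum_probEq_mul_univ {Ω α : Type*} [Fintype Ω] [Fintype α] (p : Ω → ℝ) (X : Ω → α)
    (F : α → ℝ) : ∑ ω, p ω * F (X ω) = ∑ x : α, probEq p X x * F x := by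
  rw [sum_probEq_mul]
  exact Finset.sum_subset (Finset.subset_univ _)
    (fun x _ hx => by rw [probEq_eq_zero_of_not_mem p X x hx, zero_mul])

lemma indep_exp {Ω V' W' : Type*} [Fintype Ω] [Fintype V'] (p : Ω → ℝ)
    (A : Ω → V') (W : Ω → W')
    (hind : ∀ (a : V') (w : W'),
      probEq p (fun ω => (A ω, W ω)) (a, w) = probEq p A a * probEq p W w)
    (h : V' → W' → ℝ) :
    ∑ ω, p ω * h (A ω) (W ω) = ∑ a : V', probEq p A a * ∑ ω, p ω * h a (W ω) := by
  have key := sum_probEq_mul p (fun ω => (A ω, W ω)) (fun x => h x.1 x.2)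
  refine key.trans ?_
  rw [Finset.sum_subset (s₂ := Finset.univ ×ˢ Finset.univ.image W)
    (fun x hx => by
      obtain ⟨ω, -, rfl⟩ := Finset.mem_image.mp hx
      exact Finset.mem_product.mpr
        ⟨Finset.mem_univ _, Finset.mem_image_of_mem W (Finset.mem_univ ω)⟩)
    (fun x _ hx => by rw [probEq_eq_zero_of_not_mem p _ x hx, zero_mul])]
  rw [Finset.sum_product]
  refine Finset.sum_congr rfl fun a _ => ?_
  rw [sum_probEq_mul p W (fun w => h a w), Finset.mul_sum]
  refine Finset.sum_congr rfl fun w _ => ?_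
  rw [hind a w, mul_assoc]

lemma indep_probEq {Ω V' W' β : Type*} [Fintype Ω] [Fintype V'] (p : Ω → ℝ)
    (A : Ω → V') (W : Ω → W')
    (hind : ∀ (a : V') (w : W'),
      probEq p (fun ω => (A ω, W ω)) (a, w) = probEq p A a * probEq p W w)
    (φ : W' → β) (a : V') (y : β) :
    probEq p (fun ω => (A ω, φ (W ω))) (a, y)
      = probEq p A a * probEq p (fun ω => φ (W ω)) y := by
  have h1 := indep_exp p A W hind (fun a' w => if a' = a ∧ φ w = y then 1 else 0)
  have l : probEq p (fun ω => (A ω, φ (W ω))) (a, y)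
      = ∑ ω, p ω * (if A ω = a ∧ φ (W ω) = y then 1 else 0) := by
    refine Finset.sum_congr rfl fun ω _ => ?_
    simp [Prod.mk.injEq, mul_ite]
  have r : ∀ a', (∑ ω, p ω * (if a' = a ∧ φ (W ω) = y then 1 else 0))
      = if a' = a then probEq p (fun ω => φ (W ω)) y else 0 := by
    intro a'
    by_cases h : a' = a
    · simp only [h, true_and, if_true]
      refine Finset.sum_congr rfl fun ω _ => ?_
      by_cases h2 : φ (W ω) = y <;> simp [h2, probEq]
    · simp [h]
  rw [l, h1, Finset.sum_congr rfl (fun a' _ => by rw [r a'])]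
  simp only [mul_ite, mul_zero]
  rw [Finset.sum_ite_eq' Finset.univ a]
  simp

/-- The log-ratio integrand of `I(A*; Z_j)`, as a function of the value of `(A*, Z)`. -/
def cliqueG {Ω V 𝒪 : Type*} [Fintype Ω] {m : ℕ} (p : Ω → ℝ)
    (Astar : Ω → V) (Z : Ω → Fin m → 𝒪) (j : Fin m) (b : V) (zv : Fin m → 𝒪) : ℝ :=
  Real.log (probEq p (fun ω' => (Astar ω', Z ω' j)) (b, zv j) /
    (probEq p Astar b * probEq p (fun ω' => Z ω' j) (zv j)))

/-- Clique-aggregated information gain: if the vertex set of `G` is partitioned into `m`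
cliques (by `cls`) and playing any vertex of clique `j` reveals the same observation
`Z_j`, with `A_t` identically distributed with `A*` and independent of `(A*, Z)`, then
`I(A*; (A_t, Y_{A_t})) ≥ Σ_j P(A* ∈ C_j) · I(A*; Z_j)`. -/
theorem mutualInfo_ge_clique_aggregated
    {Ω V 𝒪 : Type*} [Fintype Ω] [Fintype V] (G : SimpleGraph V)
    (m : ℕ) (cls : V → Fin m) (hcls : IsCliqueCovering G cls)
    (p : Ω → ℝ) (hp : ∀ ω, 0 ≤ p ω) (hpsum : ∑ ω, p ω = 1)
    (Astar At : Ω → V) (Z : Ω → Fin m → 𝒪)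
    (hmatch : ∀ a : V, probEq p At a = probEq p Astar a)
    (hindep : ∀ (a b : V) (z : Fin m → 𝒪),
      probEq p (fun ω => (At ω, Astar ω, Z ω)) (a, b, z) =
        probEq p At a * probEq p (fun ω => (Astar ω, Z ω)) (b, z)) :
    ∑ j : Fin m, probEq p (fun ω => cls (Astar ω)) j *
        mutualInfo p Astar (fun ω => Z ω j) ≤
      mutualInfo p Astar (fun ω => (At ω, (At ω, Z ω (cls (At ω))))) := by
  classical
  have hWind : ∀ (a : V) (w : V × (Fin m → 𝒪)),
      probEq p (fun ω => (At ω, (Astar ω, Z ω))) (a, w)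
        = probEq p At a * probEq p (fun ω => (Astar ω, Z ω)) w := by
    rintro a ⟨b, zv⟩
    exact hindep a b zv
  have stepA : mutualInfo p Astar (fun ω => (At ω, (At ω, Z ω (cls (At ω)))))
      = ∑ ω, p ω * cliqueG p Astar Z (cls (At ω)) (Astar ω) (Z ω) := by
    unfold mutualInfo cliqueG
    refine Finset.sum_congr rfl fun ω _ => ?_
    by_cases hpω : p ω = 0
    · rw [hpω, zero_mul, zero_mul]
    congr 1
    have hPA : probEq p At (At ω) ≠ 0 := by
      have h1 : p ω ≤ probEq p At (At ω) := by
        have := Finset.single_le_sum (f := fun ω' => if At ω' = At ω then p ω' else 0)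
          (fun ω' _ => by by_cases h : At ω' = At ω <;> simp [h, hp ω']) (Finset.mem_univ ω)
        simpa [probEq] using this
      have h0 := (hp ω).lt_of_ne (Ne.symm hpω)
      exact ne_of_gt (lt_of_lt_of_le h0 h1)
    have hnum : probEq p (fun ω' => (Astar ω', (At ω', (At ω', Z ω' (cls (At ω'))))))
        (Astar ω, (At ω, (At ω, Z ω (cls (At ω)))))
        = probEq p At (At ω) *
            probEq p (fun ω' => (Astar ω', Z ω' (cls (At ω)))) (Astar ω, Z ω (cls (At ω))) := by
      have hc : probEq p (fun ω' => (Astar ω', (At ω', (At ω', Z ω' (cls (At ω'))))))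
          (Astar ω, (At ω, (At ω, Z ω (cls (At ω)))))
          = probEq p (fun ω' => (At ω', (Astar ω', Z ω' (cls (At ω)))))
              (At ω, (Astar ω, Z ω (cls (At ω)))) := by
        unfold probEq
        refine Finset.sum_congr rfl fun ω' _ => ?_
        have hiff : ((Astar ω', (At ω', (At ω', Z ω' (cls (At ω')))))
              = (Astar ω, (At ω, (At ω, Z ω (cls (At ω))))))
            ↔ ((At ω', (Astar ω', Z ω' (cls (At ω)))) = (At ω, (Astar ω, Z ω (cls (At ω))))) := by
          simp only [Prod.mk.injEq]
          constructor
          · rintro ⟨h1, h2, -, h4⟩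
            rw [h2] at h4
            exact ⟨h2, h1, h4⟩
          · rintro ⟨h1, h2, h3⟩
            exact ⟨h2, h1, h1, by rw [h1]; exact h3⟩
        simp only [hiff]
        congr!
      rw [hc]
      exact indep_probEq p At (fun ω' => (Astar ω', Z ω')) hWind
        (fun w => (w.1, w.2 (cls (At ω)))) (At ω) (Astar ω, Z ω (cls (At ω)))
    have hden : probEq p (fun ω' => (At ω', (At ω', Z ω' (cls (At ω')))))
        (At ω, (At ω, Z ω (cls (At ω))))
        = probEq p At (At ω) *
            probEq p (fun ω' => Z ω' (cls (At ω))) (Z ω (cls (At ω))) := by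
      have hc : probEq p (fun ω' => (At ω', (At ω', Z ω' (cls (At ω')))))
          (At ω, (At ω, Z ω (cls (At ω))))
          = probEq p (fun ω' => (At ω', Z ω' (cls (At ω)))) (At ω, Z ω (cls (At ω))) := by
        unfold probEq
        refine Finset.sum_congr rfl fun ω' _ => ?_
        have hiff : ((At ω', (At ω', Z ω' (cls (At ω')))) = (At ω, (At ω, Z ω (cls (At ω)))))
            ↔ ((At ω', Z ω' (cls (At ω))) = (At ω, Z ω (cls (At ω)))) := by
          simp only [Prod.mk.injEq]
          constructor
          · rintro ⟨h1, -, h4⟩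
            rw [h1] at h4
            exact ⟨h1, h4⟩
          · rintro ⟨h1, h3⟩
            exact ⟨h1, h1, by rw [h1]; exact h3⟩
        simp only [hiff]
        congr!
      rw [hc]
      exact indep_probEq p At (fun ω' => (Astar ω', Z ω')) hWind
        (fun w => w.2 (cls (At ω))) (At ω) (Z ω (cls (At ω)))
    rw [hnum, hden]
    rw [show probEq p Astar (Astar ω) *
        (probEq p At (At ω) * probEq p (fun ω' => Z ω' (cls (At ω))) (Z ω (cls (At ω))))
        = probEq p At (At ω) *
          (probEq p Astar (Astar ω) * probEq p (fun ω' => Z ω' (cls (At ω))) (Z ω (cls (At ω))))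
      from by ring]
    rw [mul_div_mul_left _ _ hPA]
  have stepC : ∀ j : Fin m, mutualInfo p Astar (fun ω => Z ω j)
      = ∑ ω, p ω * cliqueG p Astar Z j (Astar ω) (Z ω) := fun j => rfl
  refine le_of_eq ?_
  calc (∑ j : Fin m, probEq p (fun ω => cls (Astar ω)) j * mutualInfo p Astar (fun ω => Z ω j))
      = ∑ ω, p ω * mutualInfo p Astar (fun ω' => Z ω' (cls (Astar ω))) :=
        (sum_probEq_mul_univ p (fun ω => cls (Astar ω))
          (fun j => mutualInfo p Astar (fun ω' => Z ω' j))).symm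
    _ = ∑ a : V, probEq p Astar a * mutualInfo p Astar (fun ω' => Z ω' (cls a)) :=
        sum_probEq_mul_univ p Astar (fun a => mutualInfo p Astar (fun ω' => Z ω' (cls a)))
    _ = ∑ a : V, probEq p At a * mutualInfo p Astar (fun ω' => Z ω' (cls a)) :=
        Finset.sum_congr rfl fun a _ => by rw [hmatch a]
    _ = ∑ a : V, probEq p At a * ∑ ω, p ω * cliqueG p Astar Z (cls a) (Astar ω) (Z ω) :=
        Finset.sum_congr rfl fun a _ => by rw [stepC (cls a)]
    _ = ∑ ω, p ω * cliqueG p Astar Z (cls (At ω)) (Astar ω) (Z ω) :=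
        (indep_exp p At (fun ω => (Astar ω, Z ω)) hWind
          (fun a w => cliqueG p Astar Z (cls a) w.1 w.2)).symm
    _ = mutualInfo p Astar (fun ω => (At ω, (At ω, Z ω (cls (At ω))))) := stepA.symm
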